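/- Let (μ₁, μ₂) be drawn from a prior P on [0,1]² with E[μ₁] > E[μ₂]. Suppose at each round t, an agent observes history H_t and chooses arm 2 if and only if E[μ₁ − μ₂ | H_t] ≤ 0 (receiving a Bernoulli reward from the chosen arm, appended to the history). Then the probability that arm 2 is never chosen in T rounds is at least E[μ₁ − μ₂]. -/

import Mathlib

open MeasureTheory

/-- Bayesian-unbiased agents: `μ₁, μ₂` are the arms' mean rewards drawn from
a prior; `ℱ t` is the σ-algebra generated by the history `H_t`; the agent in
round `t` chooses arm 2 iff `E[μ₁ − μ₂ | H_t] ≤ 0`, i.e. arm 2 is never chosen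
in rounds `1..T` iff `E[μ₁ − μ₂ | ℱ t] > 0` for all `t ∈ [T]`. -/
theorem stmt_13 {Ω : Type*} {m : MeasurableSpace Ω} {P : Measure Ω}
    [IsProbabilityMeasure P] (ℱ : Filtration ℕ m) (T : ℕ)
    (μ₁ μ₂ : Ω → ℝ) (h₁ : Measurable μ₁) (h₂ : Measurable μ₂)
    (hb₁ : ∀ ω, μ₁ ω ∈ Set.Icc (0:ℝ) 1) (hb₂ : ∀ ω, μ₂ ω ∈ Set.Icc (0:ℝ) 1)
    (hmean : ∫ ω, μ₂ ω ∂P < ∫ ω, μ₁ ω ∂P) :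
    ENNReal.ofReal (∫ ω, (μ₁ ω - μ₂ ω) ∂P) ≤
      P {ω | ∀ t, 1 ≤ t → t ≤ T → 0 < (P[fun ω' => μ₁ ω' - μ₂ ω' | ℱ t]) ω} := by
  classical
  set X : Ω → ℝ := fun ω' => μ₁ ω' - μ₂ ω' with hXdef
  set Z : ℕ → Ω → ℝ := fun t => P[X | ℱ t] with hZdef
  set A : Set Ω := {ω | ∀ t, 1 ≤ t → t ≤ T → 0 < Z t ω} with hAdef
  -- integrability of X
  have hint₁ : Integrable μ₁ P := by
    refine (integrable_const (1:ℝ)).mono' h₁.aestronglyMeasurable ?_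
    filter_upwards with ω
    rw [Real.norm_eq_abs, abs_le]
    exact ⟨le_trans (by norm_num) (hb₁ ω).1, (hb₁ ω).2⟩
  have hint₂ : Integrable μ₂ P := by
    refine (integrable_const (1:ℝ)).mono' h₂.aestronglyMeasurable ?_
    filter_upwards with ω
    rw [Real.norm_eq_abs, abs_le]
    exact ⟨le_trans (by norm_num) (hb₂ ω).1, (hb₂ ω).2⟩
  have hX : Integrable X P := hint₁.sub hint₂
  -- measurability of Z
  have hZm : ∀ t, Measurable[ℱ t] (Z t) := fun t =>
    (stronglyMeasurable_condExp (μ := P) (f := X) (m := ℱ t)).measurable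
  have hZmm : ∀ t, Measurable (Z t) := fun t => (hZm t).mono (ℱ.le t) le_rfl
  -- the "first failure time" sets
  set B : ℕ → Set Ω := fun t =>
    {ω | (∀ s, 1 ≤ s → s < t → 0 < Z s ω) ∧ Z t ω ≤ 0} with hBdef
  have hBmF : ∀ t, MeasurableSet[ℱ t] (B t) := by
    intro t
    have h1 : MeasurableSet[ℱ t] {ω | ∀ s, 1 ≤ s → s < t → 0 < Z s ω} := by
      have : {ω | ∀ s, 1 ≤ s → s < t → 0 < Z s ω} =
          ⋂ s, ⋂ (_ : 1 ≤ s), ⋂ (_ : s < t), {ω | 0 < Z s ω} := by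
        ext ω; simp [Set.mem_iInter]
      rw [this]
      refine MeasurableSet.iInter fun s => MeasurableSet.iInter fun _ =>
        MeasurableSet.iInter fun hst => ?_
      exact ((hZm s).mono (ℱ.mono hst.le) le_rfl) measurableSet_Ioi
    have h2 : MeasurableSet[ℱ t] {ω | Z t ω ≤ 0} := (hZm t) measurableSet_Iic
    exact h1.inter h2
  have hBm : ∀ t, MeasurableSet (B t) := fun t => (ℱ.le t) _ (hBmF t)
  have hAm : MeasurableSet A := by
    have : A = ⋂ t, ⋂ (_ : 1 ≤ t), ⋂ (_ : t ≤ T), {ω | 0 < Z t ω} := by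
      ext ω; simp [hAdef, Set.mem_iInter]
    rw [this]
    exact MeasurableSet.iInter fun t => MeasurableSet.iInter fun _ =>
      MeasurableSet.iInter fun _ => (hZmm t) measurableSet_Ioi
  -- complement of A is the union of the B t, t ∈ [1, T]
  have hcompl : Aᶜ = ⋃ t ∈ Finset.Icc 1 T, B t := by
    ext ω
    simp only [Set.mem_compl_iff, hAdef, Set.mem_setOf_eq, Set.mem_iUnion,
      Finset.mem_Icc, not_forall]
    constructor
    · rintro ⟨t, h1, h2, h3⟩
      have hex : ∃ s, 1 ≤ s ∧ s ≤ T ∧ Z s ω ≤ 0 := ⟨t, h1, h2, not_lt.mp h3⟩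
      refine ⟨Nat.find hex, ⟨(Nat.find_spec hex).1, (Nat.find_spec hex).2.1⟩, ?_, (Nat.find_spec hex).2.2⟩
      intro s hs1 hs2
      by_contra hcon
      have hsle : s ≤ T := le_trans hs2.le (Nat.find_spec hex).2.1
      exact absurd (Nat.find_min hex hs2) (by simp [hs1, hsle, not_lt.mp hcon])
    · rintro ⟨t, ⟨h1, h2⟩, _, h3⟩
      exact ⟨t, h1, h2, not_lt.mpr h3⟩
  -- disjointness of the B t
  have hdisj : (↑(Finset.Icc 1 T) : Set ℕ).Pairwise (Function.onFun Disjoint B) := by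
    intro s hs t ht hst
    simp only [Finset.coe_Icc, Set.mem_Icc] at hs ht
    wlog h : s < t generalizing s t
    · exact (this hst.symm ht hs (lt_of_le_of_ne (not_lt.mp h) hst.symm)).symm
    · refine Set.disjoint_left.mpr fun ω hωs hωt => ?_
      exact absurd (hωt.1 s hs.1 h) (not_lt.mpr hωs.2)
  -- integral over each B t is ≤ 0
  have hBint : ∀ t ∈ Finset.Icc 1 T, ∫ ω in B t, X ω ∂P ≤ 0 := by
    intro t _
    have heq : ∫ ω in B t, Z t ω ∂P = ∫ ω in B t, X ω ∂P :=
      setIntegral_condExp (ℱ.le t) hX (hBmF t)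
    rw [← heq]
    exact setIntegral_nonpos (hBm t) fun ω hω => hω.2
  -- integral over Aᶜ is ≤ 0
  have hcomplint : ∫ ω in Aᶜ, X ω ∂P ≤ 0 := by
    rw [hcompl, integral_biUnion_finset _ (fun t _ => hBm t) hdisj
      (fun t _ => hX.integrableOn)]
    exact Finset.sum_nonpos hBint
  -- integral over A is ≤ P A
  have hXle1 : ∀ ω, X ω ≤ 1 := fun ω => by
    have := (hb₁ ω).2; have := (hb₂ ω).1
    simp only [hXdef]; linarith
  have hAint : ∫ ω in A, X ω ∂P ≤ (P A).toReal := by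
    calc ∫ ω in A, X ω ∂P ≤ ∫ ω in A, (1:ℝ) ∂P :=
          setIntegral_mono_on hX.integrableOn (integrable_const 1).integrableOn hAm
            (fun ω _ => hXle1 ω)
      _ = (P A).toReal := by simp; rfl
  have htotal : ∫ ω, X ω ∂P ≤ (P A).toReal := by
    have := integral_add_compl hAm hX
    linarith [this, hcomplint, hAint]
  calc ENNReal.ofReal (∫ ω, X ω ∂P) ≤ ENNReal.ofReal (P A).toReal :=
        ENNReal.ofReal_le_ofReal htotal
    _ = P A := ENNReal.ofReal_toReal (measure_ne_top P A)
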